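/- If 0 ≤ x ≤ 1/(nc) ≤ 1 for a positive integer n and positive real c, then (1+x)^n − 1 ≤ ncx(e^{1/c} − 1) and 1 − (1−x)^n ≥ ncx(1 − e^{−1/c}). -/

import Mathlib

/-- If `0 ≤ x ≤ 1/(nc) ≤ 1` for a positive integer `n` and `c > 0`, then
`(1+x)^n − 1 ≤ ncx(e^{1/c} − 1)` and `1 − (1−x)^n ≥ ncx(1 − e^{−1/c})`. -/
theorem stmt15 (n : ℕ) (hn : 1 ≤ n) (c x : ℝ) (hc : 0 < c) (hx0 : 0 ≤ x)
    (hx1 : x ≤ 1 / ((n : ℝ) * c)) (h1 : 1 / ((n : ℝ) * c) ≤ 1) :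
    (1 + x) ^ n - 1 ≤ (n : ℝ) * c * x * (Real.exp (1 / c) - 1) ∧
    (n : ℝ) * c * x * (1 - Real.exp (-1 / c)) ≤ 1 - (1 - x) ^ n := by
  have hn0 : (0:ℝ) < n := by exact_mod_cast hn
  have hnc : (0:ℝ) < (n:ℝ) * c := mul_pos hn0 hc
  set b : ℝ := 1 / ((n:ℝ) * c) with hb
  have hb0 : 0 < b := by positivity
  set t : ℝ := (n:ℝ) * c * x with ht
  have ht0 : 0 ≤ t := by positivity
  have ht1 : t ≤ 1 := by
    rw [ht]
    calc (n:ℝ) * c * x ≤ (n:ℝ) * c * b := by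
          exact mul_le_mul_of_nonneg_left hx1 hnc.le
      _ = 1 := by rw [hb]; field_simp
  have htb : t * b = x := by
    rw [ht, hb]; field_simp
  have hconv := convexOn_pow (𝕜 := ℝ) n
  -- bound (1 + b)^n ≤ exp (1/c)
  have hkey : (n:ℝ) * b = 1 / c := by
    rw [hb]; field_simp
  have hexp1 : (1 + b) ^ n ≤ Real.exp (1 / c) := by
    have h := Real.add_one_le_exp b
    calc (1 + b) ^ n ≤ (Real.exp b) ^ n :=
          pow_le_pow_left₀ (by positivity : (0:ℝ) ≤ 1 + b) (by linarith) n
      _ = Real.exp ((n:ℝ) * b) := by rw [← Real.exp_nat_mul]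
      _ = Real.exp (1 / c) := by rw [hkey]
  have h1b : 0 ≤ 1 - b := by linarith
  have hexp2 : (1 - b) ^ n ≤ Real.exp (-1 / c) := by
    have h := Real.add_one_le_exp (-b)
    have h2 : 1 - b ≤ Real.exp (-b) := by linarith
    calc (1 - b) ^ n ≤ (Real.exp (-b)) ^ n := pow_le_pow_left₀ h1b h2 n
      _ = Real.exp ((n:ℝ) * (-b)) := by rw [← Real.exp_nat_mul]
      _ = Real.exp (-1 / c) := by rw [show (n:ℝ) * (-b) = -1/c by rw [mul_neg, hkey]; ring]
  constructor
  · have hch := hconv.2 (Set.mem_Ici.mpr (by norm_num : (0:ℝ) ≤ 1))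
      (Set.mem_Ici.mpr (by linarith : (0:ℝ) ≤ 1 + b))
      (by linarith : (0:ℝ) ≤ 1 - t) ht0 (by ring)
    simp only [smul_eq_mul] at hch
    have heq : (1 - t) * 1 + t * (1 + b) = 1 + x := by rw [← htb]; ring
    rw [heq, one_pow] at hch
    have : (1 + x) ^ n ≤ 1 + t * ((1 + b) ^ n - 1) := by linarith
    have h2 : t * ((1 + b) ^ n - 1) ≤ t * (Real.exp (1/c) - 1) :=
      mul_le_mul_of_nonneg_left (by linarith) ht0
    linarith
  · have hch := hconv.2 (Set.mem_Ici.mpr (by norm_num : (0:ℝ) ≤ 1))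
      (Set.mem_Ici.mpr h1b)
      (by linarith : (0:ℝ) ≤ 1 - t) ht0 (by ring)
    simp only [smul_eq_mul] at hch
    have heq : (1 - t) * 1 + t * (1 - b) = 1 - x := by rw [← htb]; ring
    rw [heq, one_pow] at hch
    have h2 : t * (1 - Real.exp (-1/c)) ≤ t * (1 - (1 - b) ^ n) :=
      mul_le_mul_of_nonneg_left (by linarith) ht0
    have : t * (1 - Real.exp (-1/c)) = (n:ℝ) * c * x * (1 - Real.exp (-1/c)) := by rw [ht]
    linarith
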